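/- Let g : ℝⁿ → ℝⁿ be differentiable at x* with g(x*) = x*, let x⁰,...,xᵐ ∈ ℝⁿ, and ν ∈ ℝ^{m+1} with Σᵢνᵢ = 1 and ‖ν‖_∞ ≤ B. With x̂ = Σνᵢxⁱ and ĝ = Σνᵢg(xⁱ), one has ‖g(x̂) - ĝ‖ ≤ ‖Σᵢ νᵢ [g'(x*)(xⁱ - x*) + g(x*) - g(xⁱ)]‖ + ε(‖x̂ - x*‖)‖x̂ - x*‖, where ε(t) → 0 as t → 0 comes from the first-order expansion of g at x*; in particular ‖g(x̂) - ĝ‖ = o(Σᵢ ‖xⁱ - x*‖) as all xⁱ → x* with ν bounded. -/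

import Mathlib

theorem stmt_13 (n m : ℕ)
    (g : EuclideanSpace ℝ (Fin n) → EuclideanSpace ℝ (Fin n))
    (xstar : EuclideanSpace ℝ (Fin n)) (hfix : g xstar = xstar)
    (A : EuclideanSpace ℝ (Fin n) →L[ℝ] EuclideanSpace ℝ (Fin n))
    (hdiff : HasFDerivAt g A xstar) (B : ℝ) :
    ∀ δ > (0 : ℝ), ∃ r > (0 : ℝ),
      ∀ (x : Fin (m + 1) → EuclideanSpace ℝ (Fin n)) (ν : Fin (m + 1) → ℝ),
        (∑ i, ν i = 1) → (∀ i, |ν i| ≤ B) → (∀ i, ‖x i - xstar‖ ≤ r) →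
        ‖g (∑ i, ν i • x i) - ∑ i, ν i • g (x i)‖ ≤
          ‖∑ i, ν i • (A (x i - xstar) + g xstar - g (x i))‖ +
            δ * ‖(∑ i, ν i • x i) - xstar‖ := by
  intro δ hδ
  have h := hdiff.isLittleO.def hδ
  rw [Metric.eventually_nhds_iff] at h
  obtain ⟨ε, hε, hball⟩ := h
  set C : ℝ := (m + 1 : ℝ) * max B 1 with hCdef
  have hC : 0 < C := by positivity
  refine ⟨ε / (2 * C), by positivity, ?_⟩
  intro x ν hsum hB hr
  set xh := ∑ i, ν i • x i with hxh
  have hxs : xstar = ∑ i, ν i • xstar := by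
    rw [← Finset.sum_smul, hsum, one_smul]
  have hdiffpt : xh - xstar = ∑ i, ν i • (x i - xstar) := by
    rw [hxh]
    nth_rewrite 1 [hxs]
    rw [← Finset.sum_sub_distrib]
    exact Finset.sum_congr rfl (fun i _ => (smul_sub _ _ _).symm)
  have hnorm : ‖xh - xstar‖ < ε := by
    calc ‖xh - xstar‖ = ‖∑ i, ν i • (x i - xstar)‖ := by rw [hdiffpt]
      _ ≤ ∑ i, ‖ν i • (x i - xstar)‖ := norm_sum_le _ _
      _ ≤ ∑ i : Fin (m + 1), max B 1 * (ε / (2 * C)) := by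
          refine Finset.sum_le_sum (fun i _ => ?_)
          rw [norm_smul, Real.norm_eq_abs]
          exact mul_le_mul (le_trans (hB i) (le_max_left _ _)) (hr i)
            (norm_nonneg _) (le_trans (abs_nonneg _) (le_trans (hB i) (le_max_left _ _)))
      _ = C * (ε / (2 * C)) := by
          rw [Finset.sum_const, Finset.card_univ, Fintype.card_fin]
          push_cast [hCdef]; ring
      _ = ε / 2 := by field_simp
      _ < ε := by linarith
  have hdist : dist xh xstar < ε := by rwa [dist_eq_norm]
  have hfoc := hball hdist
  have h1 : ∑ i, ν i • A (x i - xstar) = A (xh - xstar) := by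
    rw [hdiffpt, map_sum]
    exact Finset.sum_congr rfl (fun i _ => (A.map_smul _ _).symm)
  have h2 : ∑ i, ν i • g xstar = g xstar := by
    rw [← Finset.sum_smul, hsum, one_smul]
  have key : g xh - ∑ i, ν i • g (x i) =
      (g xh - g xstar - A (xh - xstar)) +
        ∑ i, ν i • (A (x i - xstar) + g xstar - g (x i)) := by
    simp only [smul_add, smul_sub, Finset.sum_add_distrib, Finset.sum_sub_distrib, h1, h2]
    abel
  calc ‖g xh - ∑ i, ν i • g (x i)‖
      = ‖(g xh - g xstar - A (xh - xstar)) +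
          ∑ i, ν i • (A (x i - xstar) + g xstar - g (x i))‖ := by rw [key]
    _ ≤ ‖g xh - g xstar - A (xh - xstar)‖ +
          ‖∑ i, ν i • (A (x i - xstar) + g xstar - g (x i))‖ := norm_add_le _ _
    _ ≤ δ * ‖xh - xstar‖ +
          ‖∑ i, ν i • (A (x i - xstar) + g xstar - g (x i))‖ := by
        exact add_le_add_left hfoc _
    _ = _ := by ring
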